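/- Let ν be a Radon measure on ℝ^d, U ⊂ ℝ^d open, F: U → M_{m,n}(ℝ), and 0 < ε, c < 1. Suppose for every ball B ⊂ U there is s > 0 such that for all t ∈ 𝔞⁺ with ‖t‖ ≥ s, ν({x ∈ B : g_t τ̄(F(x)) ∉ K_ε}) ≤ c·ν(B). Then F_*ν(DI_ε(T)) = 0 for every unbounded T ⊂ 𝔞⁺. -/

import Mathlib

open MeasureTheory

/-- The cone `𝔞⁺`. -/
def aPlus (m n : ℕ) : Set (Fin (m + n) → ℝ) :=
  {t | (∀ i, 0 < t i) ∧
    ∑ i : Fin m, t (Fin.castAdd n i) = ∑ j : Fin n, t (Fin.natAdd m j)}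

/-- `g_t τ̄(Y) ∉ K_ε`: the lattice `g_t τ(Y) ℤ^{m+n}` has a nonzero vector of sup-norm
less than `ε`; explicitly, the system `|Yᵢ q − pᵢ| < ε e^{−tᵢ}`, `|qⱼ| < ε e^{t_{m+j}}`
has a nontrivial integer solution. -/
def notInKeps (m n : ℕ) (ε : ℝ) (t : Fin (m + n) → ℝ) (Y : Fin m → Fin n → ℝ) : Prop :=
  ∃ (q : Fin n → ℤ) (p : Fin m → ℤ), ¬(q = 0 ∧ p = 0) ∧
    (∀ i : Fin m,
      |∑ j : Fin n, Y i j * (q j : ℝ) - (p i : ℝ)| < ε * Real.exp (-(t (Fin.castAdd n i)))) ∧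
    (∀ j : Fin n, |(q j : ℝ)| < ε * Real.exp (t (Fin.natAdd m j)))

/-- `DI_ε(T)`. -/
def DIset (m n : ℕ) (ε : ℝ) (T : Set (Fin (m + n) → ℝ)) : Set (Fin m → Fin n → ℝ) :=
  {Y | ∃ t₀ : ℝ, ∀ t ∈ T, t₀ < ‖t‖ →
    ∃ (q : Fin n → ℤ) (p : Fin m → ℤ), q ≠ 0 ∧
      (∀ i : Fin m,
        |∑ j : Fin n, Y i j * (q j : ℝ) - (p i : ℝ)| < ε * Real.exp (-(t (Fin.castAdd n i)))) ∧
      (∀ j : Fin n, |(q j : ℝ)| < ε * Real.exp (t (Fin.natAdd m j)))}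

/-- **Proposition 3.1 of Kleinbock–Weiss**: let `ν` be a Radon measure on `ℝ^d`, `U`
open, `F : U → M_{m,n}(ℝ)` and `0 < ε, c < 1`. If for every ball `B ⊆ U` there is
`s > 0` with `ν({x ∈ B : g_t τ̄(F x) ∉ K_ε}) ≤ c ν(B)` for all `t ∈ 𝔞⁺` with
`‖t‖ ≥ s`, then `F_*ν(DI_ε(T)) = 0` for every unbounded `T ⊂ 𝔞⁺`. -/
theorem density_criterion (d m n : ℕ) (hm : 0 < m) (hn : 0 < n)
    (ν : Measure (Fin d → ℝ)) [IsLocallyFiniteMeasure ν] [ν.Regular]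
    (U : Set (Fin d → ℝ)) (hU : IsOpen U)
    (F : (Fin d → ℝ) → (Fin m → Fin n → ℝ))
    (ε c : ℝ) (hε : 0 < ε) (hε' : ε < 1) (hc : 0 < c) (hc' : c < 1)
    (hball : ∀ (x : Fin d → ℝ) (r : ℝ), 0 < r → Metric.closedBall x r ⊆ U →
      ∃ s > (0:ℝ), ∀ t ∈ aPlus m n, s ≤ ‖t‖ →
        ν {z ∈ Metric.closedBall x r | notInKeps m n ε t (F z)} ≤
          ENNReal.ofReal c * ν (Metric.closedBall x r)) :
    ∀ T ⊆ aPlus m n, (∀ s : ℝ, ∃ t ∈ T, s < ‖t‖) →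
      ν {x ∈ U | F x ∈ DIset m n ε T} = 0 := by
  intro T hT hTunb
  -- the pieces of `DIset` with fixed natural threshold `k`
  set S : ℕ → Set (Fin d → ℝ) := fun k =>
    {x | x ∈ U ∧ ∀ t ∈ T, (k : ℝ) < ‖t‖ →
      ∃ (q : Fin n → ℤ) (p : Fin m → ℤ), q ≠ 0 ∧
        (∀ i : Fin m,
          |∑ j : Fin n, F x i j * (q j : ℝ) - (p i : ℝ)| <
            ε * Real.exp (-(t (Fin.castAdd n i)))) ∧
        (∀ j : Fin n, |(q j : ℝ)| < ε * Real.exp (t (Fin.natAdd m j)))} with hSdef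
  have hsub : {x ∈ U | F x ∈ DIset m n ε T} ⊆ ⋃ k : ℕ, S k := by
    rintro x ⟨hxU, t₀, ht₀⟩
    obtain ⟨k, hk⟩ := exists_nat_ge t₀
    exact Set.mem_iUnion.2 ⟨k, hxU, fun t ht hlt => ht₀ t ht (lt_of_le_of_lt hk hlt)⟩
  refine measure_mono_null hsub (measure_iUnion_null fun k => ?_)
  -- show `ν (S k) = 0` via the Lebesgue density theorem
  have key : ∀ x ∈ S k,
      ¬ Filter.Tendsto
        (fun r => ν (S k ∩ Metric.closedBall x r) / ν (Metric.closedBall x r))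
        (nhdsWithin 0 (Set.Ioi 0)) (nhds 1) := by
    intro x hx htend
    obtain ⟨δ, hδpos, hδ⟩ := Metric.isOpen_iff.1 hU x hx.1
    have hr₁pos : 0 < δ / 2 := by linarith
    have hball_sub : Metric.closedBall x (δ / 2) ⊆ U :=
      (Metric.closedBall_subset_ball (by linarith)).trans hδ
    have ev : ∀ᶠ r in nhdsWithin (0:ℝ) (Set.Ioi 0),
        ν (S k ∩ Metric.closedBall x r) / ν (Metric.closedBall x r) ≤ ENNReal.ofReal c := by
      filter_upwards [Ioc_mem_nhdsGT_of_mem ⟨le_rfl, hr₁pos⟩] with r hr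
      have hrU : Metric.closedBall x r ⊆ U :=
        (Metric.closedBall_subset_closedBall hr.2).trans hball_sub
      obtain ⟨s, hs0, hs⟩ := hball x r hr.1 hrU
      obtain ⟨t, htT, htnorm⟩ := hTunb (max s k)
      have hst : s ≤ ‖t‖ := le_of_lt (lt_of_le_of_lt (le_max_left _ _) htnorm)
      have hkt : (k : ℝ) < ‖t‖ := lt_of_le_of_lt (le_max_right _ _) htnorm
      have hincl : S k ∩ Metric.closedBall x r ⊆
          {z ∈ Metric.closedBall x r | notInKeps m n ε t (F z)} := by
        rintro z ⟨hzS, hzB⟩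
        obtain ⟨q, p, hq, h1, h2⟩ := hzS.2 t htT hkt
        exact ⟨hzB, q, p, fun h => hq h.1, h1, h2⟩
      have hle : ν (S k ∩ Metric.closedBall x r) ≤
          ENNReal.ofReal c * ν (Metric.closedBall x r) :=
        le_trans (measure_mono hincl) (hs t (hT htT) hst)
      exact ENNReal.div_le_of_le_mul hle
    have h1le : (1 : ENNReal) ≤ ENNReal.ofReal c := le_of_tendsto htend ev
    have : ENNReal.ofReal c < 1 := ENNReal.ofReal_lt_one.2 hc'
    exact absurd h1le (not_le.2 this)
  have hae := Besicovitch.ae_tendsto_measure_inter_div ν (S k)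
  rw [Filter.eventually_iff, mem_ae_iff] at hae
  have hSsub : S k ⊆ {x | ¬ Filter.Tendsto
      (fun r => ν (S k ∩ Metric.closedBall x r) / ν (Metric.closedBall x r))
      (nhdsWithin 0 (Set.Ioi 0)) (nhds 1)} := fun x hx => key x hx
  have : ν.restrict (S k) (S k) = 0 :=
    le_antisymm (le_trans (measure_mono hSsub) (le_of_eq hae)) zero_le
  rwa [Measure.restrict_apply_self] at this
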